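/- Let G be a locally compact Hausdorff topological group with a left Haar measure, let H and K be separable complex Hilbert spaces, let X ⊆ B(H;K) be a norm-closed linear subspace closed under the ternary product (a,b,c) ↦ a b* c, and let α : G → (X → X) be a group homomorphism such that each α_g is a surjective linear isometry satisfying α_g(a b* c) = α_g(a)·α_g(b)*·α_g(c), and for each x ∈ X the map g ↦ α_g(x) is WOT-continuous. For x ∈ X let π(x) : L²(G;H) → L²(G;K) be the bounded operator with (π(x)ζ)(h) = α_{h⁻¹}(x)(ζ(h)) a.e., let σ_g and τ_g be the left-translation unitaries on L²(G;H) and L²(G;K) respectively ((σ_gζ)(h) = ζ(g⁻¹h), (τ_gη)(h) = η(g⁻¹h)), and let N denote the WOT-closed linear span of {τ_g : g ∈ G} in B(L²(G;K)). Then the following four WOT-closed linear spans in B(L²(G;H); L²(G;K)) coincide: (1) the WOT-closed linear span of {B·π(x) : B ∈ N, x ∈ X}; (2) the WOT-closed linear span of {τ_g·π(x) : g ∈ G, x ∈ X}; (3) the WOT-closed linear span of {τ_g·π(x)·σ_{g'} : g, g' ∈ G, x ∈ X}; (4) the WOT-closed linear span of {π(x)·σ_g : g ∈ G, x ∈ X}.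 (This common space is the crossed product G ⋉_α X.) -/

import Mathlib

open Filter Topology MeasureTheory ContinuousLinearMap

noncomputable section

/-- The closure of the linear span of a set of operators in the weak operator topology. -/
def wotClosedSpan {E F : Type*} [NormedAddCommGroup E] [NormedSpace ℂ E]
    [NormedAddCommGroup F] [NormedSpace ℂ F] (S : Set (E →L[ℂ] F)) : Set (E →L[ℂ] F) :=
  (ContinuousLinearMapWOT.ofCLM : (E →L[ℂ] F) → (E →WOT[ℂ] F)) ⁻¹'
    (closure ((ContinuousLinearMapWOT.ofCLM : (E →L[ℂ] F) → (E →WOT[ℂ] F)) '' (Submodule.span ℂ S : Set (E →L[ℂ] F))))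

section Aux

variable {E F E' : Type*} [NormedAddCommGroup E] [NormedSpace ℂ E]
    [NormedAddCommGroup F] [NormedSpace ℂ F]
    [NormedAddCommGroup E'] [NormedSpace ℂ E']

lemma subset_wotClosedSpan (S : Set (E →L[ℂ] F)) : S ⊆ wotClosedSpan S := fun _ hx =>
  subset_closure (Set.mem_image_of_mem _ (Submodule.subset_span hx))

lemma wotClosedSpan_mono {S T : Set (E →L[ℂ] F)} (h : S ⊆ T) :
    wotClosedSpan S ⊆ wotClosedSpan T :=
  Set.preimage_mono (closure_mono (Set.image_mono (Submodule.span_mono h)))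

lemma wotClosedSpan_le {S T : Set (E →L[ℂ] F)} (h : S ⊆ wotClosedSpan T) :
    wotClosedSpan S ⊆ wotClosedSpan T := by
  set e := (ContinuousLinearMapWOT.linearEquiv ℂ (E := E) (F := F) (σ := RingHom.id ℂ)).symm
  set M := ((Submodule.span ℂ T).map (e : (E →L[ℂ] F) →ₗ[ℂ] (E →WOT[ℂ] F))).topologicalClosure
  have hM : closure (e '' (Submodule.span ℂ T : Set (E →L[ℂ] F))) = (M : Set (E →WOT[ℂ] F)) := rfl
  intro x hx
  have hspan : (Submodule.span ℂ S : Set (E →L[ℂ] F)) ⊆ e ⁻¹' (M : Set (E →WOT[ℂ] F)) := by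
    have : Submodule.span ℂ S ≤ M.comap (e : (E →L[ℂ] F) →ₗ[ℂ] (E →WOT[ℂ] F)) := by
      rw [Submodule.span_le]
      intro s hs
      have hh := h hs
      rw [wotClosedSpan, Set.mem_preimage] at hh
      have hh' : e s ∈ (M : Set (E →WOT[ℂ] F)) := hM ▸ hh
      exact Submodule.mem_comap.2 hh'
    exact this
  have : e '' (Submodule.span ℂ S : Set (E →L[ℂ] F)) ⊆ (M : Set (E →WOT[ℂ] F)) := by
    rintro _ ⟨s, hs, rfl⟩; exact hspan hs
  have hx' : e x ∈ closure (M : Set (E →WOT[ℂ] F)) :=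
    closure_mono this hx
  have hclosed : IsClosed (M : Set (E →WOT[ℂ] F)) := Submodule.isClosed_topologicalClosure _
  rw [hclosed.closure_eq] at hx'
  show e x ∈ closure (e '' (Submodule.span ℂ T : Set (E →L[ℂ] F)))
  rw [hM]; exact hx'

lemma comp_mem_wotClosedSpan {S : Set (F →L[ℂ] E')} {B : F →L[ℂ] E'} (A : E →L[ℂ] F)
    (hB : B ∈ wotClosedSpan S) :
    B ∘L A ∈ wotClosedSpan ((fun C => C ∘L A) '' S) := by
  set eF := (ContinuousLinearMapWOT.linearEquiv ℂ (E := F) (F := E') (σ := RingHom.id ℂ)).symm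
  set eE := (ContinuousLinearMapWOT.linearEquiv ℂ (E := E) (F := E') (σ := RingHom.id ℂ)).symm
  set L : (F →L[ℂ] E') →ₗ[ℂ] (E →L[ℂ] E') :=
    { toFun := fun C => C ∘L A
      map_add' := fun C D => ContinuousLinearMap.add_comp C D A
      map_smul' := fun c C => ContinuousLinearMap.smul_comp c C A }
  set Φ : (F →WOT[ℂ] E') → (E →WOT[ℂ] E') := fun C => eE ((eF.symm C) ∘L A) with hΦdef
  have hΦ : Continuous Φ := by
    apply ContinuousLinearMapWOT.continuous_of_dual_apply_continuous
    intro x y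
    have : (fun C : F →WOT[ℂ] E' => y (Φ C x)) = fun C => y (C (A x)) := by
      funext C
      simp only [hΦdef, ContinuousLinearMap.toWOT_apply]
      rfl
    rw [this]
    exact ContinuousLinearMapWOT.continuous_dual_apply (A x) y
  have h1 : Φ (eF B) ∈ closure (Φ '' (eF '' (Submodule.span ℂ S : Set (F →L[ℂ] E')))) :=
    image_closure_subset_closure_image hΦ (Set.mem_image_of_mem Φ hB)
  have h2 : Φ '' (eF '' (Submodule.span ℂ S : Set (F →L[ℂ] E'))) ⊆
      eE '' (Submodule.span ℂ ((fun C => C ∘L A) '' S) : Set (E →L[ℂ] E')) := by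
    rintro _ ⟨_, ⟨s, hs, rfl⟩, rfl⟩
    refine ⟨s ∘L A, ?_, by simp [hΦdef]⟩
    have : s ∘L A ∈ (Submodule.span ℂ S).map L := ⟨s, hs, rfl⟩
    rwa [Submodule.map_span] at this
  have h3 : Φ (eF B) = eE (B ∘L A) := by simp [hΦdef]
  have h4 := closure_mono h2 h1
  rw [h3] at h4
  exact h4

end Aux

/-- The four natural descriptions of the crossed product `G ⋉_α X` of a W*-TRO by a continuous
group action coincide. -/
theorem crossed_product_descriptions_coincide
    {G : Type*} [Group G] [TopologicalSpace G] [IsTopologicalGroup G]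
    [LocallyCompactSpace G] [T2Space G] [MeasurableSpace G] [BorelSpace G]
    (μ : MeasureTheory.Measure G) [μ.IsHaarMeasure]
    {H K : Type*}
    [NormedAddCommGroup H] [InnerProductSpace ℂ H] [CompleteSpace H]
    [TopologicalSpace.SeparableSpace H]
    [NormedAddCommGroup K] [InnerProductSpace ℂ K] [CompleteSpace K]
    [TopologicalSpace.SeparableSpace K]
    (X : Set (H →L[ℂ] K))
    (hX0 : (0 : H →L[ℂ] K) ∈ X)
    (hXadd : ∀ a ∈ X, ∀ b ∈ X, a + b ∈ X)
    (hXsmul : ∀ (c : ℂ), ∀ a ∈ X, c • a ∈ X)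
    (hXclosed : IsClosed X)
    (hXtro : ∀ a ∈ X, ∀ b ∈ X, ∀ c ∈ X, a ∘L ((ContinuousLinearMap.adjoint b) ∘L c) ∈ X)
    (α : G → (H →L[ℂ] K) → (H →L[ℂ] K))
    (hbij : ∀ g : G, Set.BijOn (α g) X X)
    (hadd : ∀ g : G, ∀ x ∈ X, ∀ y ∈ X, α g (x + y) = α g x + α g y)
    (hsmul : ∀ g : G, ∀ (c : ℂ), ∀ x ∈ X, α g (c • x) = c • α g x)
    (hiso : ∀ g : G, ∀ x ∈ X, ‖α g x‖ = ‖x‖)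
    (htro : ∀ g : G, ∀ a ∈ X, ∀ b ∈ X, ∀ c ∈ X,
      α g (a ∘L ((ContinuousLinearMap.adjoint b) ∘L c)) =
        (α g a) ∘L ((ContinuousLinearMap.adjoint (α g b)) ∘L (α g c)))
    (hhom : ∀ g h : G, ∀ x ∈ X, α (g * h) x = α g (α h x))
    (hone : ∀ x ∈ X, α (1 : G) x = x)
    (hcont : ∀ x ∈ X, Continuous fun g : G => (ContinuousLinearMapWOT.ofCLM (α g x) : H →WOT[ℂ] K))
    -- the integrated representation π
    (π : (H →L[ℂ] K) → (Lp H 2 μ →L[ℂ] Lp K 2 μ))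
    (hπ : ∀ x ∈ X, ∀ ζ : Lp H 2 μ, ∀ᵐ h ∂μ, (π x ζ : G → K) h = α h⁻¹ x ((ζ : G → H) h))
    -- the left translation unitaries σ and τ
    (σ : G → (Lp H 2 μ →L[ℂ] Lp H 2 μ))
    (hσ : ∀ g : G, ∀ ζ : Lp H 2 μ, ∀ᵐ h ∂μ, (σ g ζ : G → H) h = (ζ : G → H) (g⁻¹ * h))
    (τ : G → (Lp K 2 μ →L[ℂ] Lp K 2 μ))
    (hτ : ∀ g : G, ∀ η : Lp K 2 μ, ∀ᵐ h ∂μ, (τ g η : G → K) h = (η : G → K) (g⁻¹ * h))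
    -- N is the WOT-closed linear span of the translation unitaries τ_g
    (N : Set (Lp K 2 μ →L[ℂ] Lp K 2 μ))
    (hN : N = wotClosedSpan {B | ∃ g : G, B = τ g}) :
    wotClosedSpan {T | ∃ B ∈ N, ∃ x ∈ X, T = B ∘L π x} =
      wotClosedSpan {T | ∃ g : G, ∃ x ∈ X, T = (τ g) ∘L π x} ∧
    wotClosedSpan {T | ∃ B ∈ N, ∃ x ∈ X, T = B ∘L π x} =
      wotClosedSpan {T | ∃ g g' : G, ∃ x ∈ X, T = (τ g) ∘L ((π x) ∘L σ g')} ∧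
    wotClosedSpan {T | ∃ B ∈ N, ∃ x ∈ X, T = B ∘L π x} =
      wotClosedSpan {T | ∃ g : G, ∃ x ∈ X, T = (π x) ∘L σ g} := by
  -- pull back a.e. statements along left translation
  have hpull : ∀ (g : G) (p : G → Prop), (∀ᵐ k ∂μ, p k) → ∀ᵐ h ∂μ, p (g * h) := by
    intro g p hp
    exact ((measurePreserving_mul_left μ g).quasiMeasurePreserving.tendsto_ae).eventually hp
  -- τ is multiplicative
  have htmul : ∀ g g' : G, τ g ∘L τ g' = τ (g * g') := by
    intro g g'
    ext η
    filter_upwards [hτ g (τ g' η), hpull g⁻¹ _ (hτ g' η), hτ (g * g') η] with h e1 e2 e3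
    simp only [ContinuousLinearMap.comp_apply]
    rw [e1, e2, e3, mul_inv_rev, mul_assoc]
  -- σ 1 = id
  have hσ1 : σ 1 = ContinuousLinearMap.id ℂ (Lp H 2 μ) := by
    ext ζ
    filter_upwards [hσ 1 ζ] with h e1
    rw [e1]
    simp
  -- the covariance relation
  have key : ∀ g : G, ∀ x ∈ X, π x ∘L σ g = τ g ∘L π (α g⁻¹ x) := by
    intro g x hx
    have hy : α g⁻¹ x ∈ X := (hbij g⁻¹).mapsTo hx
    ext ζ
    filter_upwards [hπ x hx (σ g ζ), hσ g ζ, hτ g (π (α g⁻¹ x) ζ),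
      hpull g⁻¹ _ (hπ _ hy ζ)] with h e1 e2 e3 e4
    simp only [ContinuousLinearMap.comp_apply]
    rw [e1, e2, e3, e4]
    have : α ((g⁻¹ * h)⁻¹) (α g⁻¹ x) = α h⁻¹ x := by
      rw [mul_inv_rev, inv_inv, ← hhom (h⁻¹ * g) g⁻¹ x hx, mul_inv_cancel_right]
    rw [this]
  have hinv1 : ∀ g : G, ∀ x ∈ X, α g⁻¹ (α g x) = x := by
    intro g x hx
    rw [← hhom g⁻¹ g x hx, inv_mul_cancel, hone x hx]
  -- the generating sets (2), (3), (4) coincide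
  have hS42 : {T | ∃ g : G, ∃ x ∈ X, T = (π x) ∘L σ g} =
      {T | ∃ g : G, ∃ x ∈ X, T = (τ g) ∘L π x} := by
    ext T
    constructor
    · rintro ⟨g, x, hx, rfl⟩
      exact ⟨g, α g⁻¹ x, (hbij g⁻¹).mapsTo hx, key g x hx⟩
    · rintro ⟨g, x, hx, rfl⟩
      refine ⟨g, α g x, (hbij g).mapsTo hx, ?_⟩
      rw [key g (α g x) ((hbij g).mapsTo hx), hinv1 g x hx]
  have hS32 : {T | ∃ g g' : G, ∃ x ∈ X, T = (τ g) ∘L ((π x) ∘L σ g')} =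
      {T | ∃ g : G, ∃ x ∈ X, T = (τ g) ∘L π x} := by
    ext T
    constructor
    · rintro ⟨g, g', x, hx, rfl⟩
      refine ⟨g * g', α g'⁻¹ x, (hbij g'⁻¹).mapsTo hx, ?_⟩
      rw [key g' x hx, ← ContinuousLinearMap.comp_assoc, htmul]
    · rintro ⟨g, x, hx, rfl⟩
      exact ⟨g, 1, x, hx, by rw [hσ1, ContinuousLinearMap.comp_id]⟩
  -- (1) and (2)
  have h21 : {T | ∃ g : G, ∃ x ∈ X, T = (τ g) ∘L π x} ⊆
      {T | ∃ B ∈ N, ∃ x ∈ X, T = B ∘L π x} := by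
    rintro T ⟨g, x, hx, rfl⟩
    refine ⟨τ g, ?_, x, hx, rfl⟩
    rw [hN]
    exact subset_wotClosedSpan _ ⟨g, rfl⟩
  have h12 : {T | ∃ B ∈ N, ∃ x ∈ X, T = B ∘L π x} ⊆
      wotClosedSpan {T | ∃ g : G, ∃ x ∈ X, T = (τ g) ∘L π x} := by
    rintro T ⟨B, hB, x, hx, rfl⟩
    rw [hN] at hB
    refine wotClosedSpan_mono ?_ (comp_mem_wotClosedSpan (π x) hB)
    rintro _ ⟨C, ⟨g, rfl⟩, rfl⟩
    exact ⟨g, x, hx, rfl⟩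
  have hmain : wotClosedSpan {T | ∃ B ∈ N, ∃ x ∈ X, T = B ∘L π x} =
      wotClosedSpan {T | ∃ g : G, ∃ x ∈ X, T = (τ g) ∘L π x} :=
    Set.Subset.antisymm (wotClosedSpan_le h12)
      (wotClosedSpan_le (h21.trans (subset_wotClosedSpan _)))
  exact ⟨hmain, by rw [hS32]; exact hmain, by rw [hS42]; exact hmain⟩

end
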